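/- arXiv:2306.08617 — 3 statements merged into one kernel-verified Lean document; each statement's English description precedes it below -/
import Mathlib

section
/- Let G be a connected weighted graph with Laplacian L and incidence matrix C. If f_{q/p}(Cy) lies in the image of C, then min{ ‖x‖_{G,p}^p : ⟨y, x⟩_L = 1 } = ‖y‖_{G,q}^{-p}, where 1/p + 1/q = 1 and p, q > 1. -/
open Matrix Finset

/-- `Mp` is the Moore–Penrose pseudoinverse of `M` (the four Penrose conditions). -/
def IsMoorePenrose {α β : Type*} [Fintype α] [Fintype β]
    (M : Matrix α β ℝ) (Mp : Matrix β α ℝ) : Prop :=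
  M * Mp * M = M ∧ Mp * M * Mp = Mp ∧ (M * Mp)ᵀ = M * Mp ∧ (Mp * M)ᵀ = Mp * M

/-- An undirected weighted graph on `n` vertices with `m` edges, given by the two
endpoints `s ℓ ≠ t ℓ` and a positive weight `w ℓ` of each edge. -/
structure WGraph (n m : ℕ) where
  s : Fin m → Fin n
  t : Fin m → Fin n
  w : Fin m → ℝ
  w_pos : ∀ ℓ, 0 < w ℓ
  s_ne_t : ∀ ℓ, s ℓ ≠ t ℓ

namespace WGraph

variable {n m : ℕ}

/-- The (signed) incidence matrix `C ∈ ℝ^{m×n}` of the graph. -/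
def inc (G : WGraph n m) : Matrix (Fin m) (Fin n) ℝ :=
  fun ℓ i => if i = G.s ℓ then 1 else if i = G.t ℓ then -1 else 0

/-- The graph Laplacian `L = Cᵀ W C`. -/
def lap (G : WGraph n m) : Matrix (Fin n) (Fin n) ℝ :=
  (G.inc)ᵀ * Matrix.diagonal G.w * G.inc

/-- Connectedness, expressed as: the kernel of the incidence matrix consists
exactly of the constant vectors. -/
def Connected (G : WGraph n m) : Prop :=
  ∀ x : Fin n → ℝ, G.inc.mulVec x = 0 → ∃ c : ℝ, ∀ i, x i = c

/-- The graph `p`-seminorm `‖x‖_{G,p} = (∑_ℓ w_ℓ |(Cx)_ℓ|^p)^{1/p}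
  (= (∑_{ij} a_{ij} |x_i − x_j|^p)^{1/p})`. -/
noncomputable def gnorm (G : WGraph n m) (p : ℝ) (x : Fin n → ℝ) : ℝ :=
  (∑ ℓ, G.w ℓ * |G.inc.mulVec x ℓ| ^ p) ^ (1 / p)

/-- The effective `p`-resistance
`r_{G,p}(i,j) = (min { S_{G,p}(x) : x_i − x_j = 1 })⁻¹`. -/
noncomputable def presistance (G : WGraph n m) (p : ℝ) (i j : Fin n) : ℝ :=
  (sInf {e : ℝ | ∃ x : Fin n → ℝ, x i - x j = 1 ∧
      e = ∑ ℓ, G.w ℓ * |G.inc.mulVec x ℓ| ^ p})⁻¹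

end WGraph

/-- The (unweighted) ℓ^p norm on `ι → ℝ`. -/
noncomputable def pnorm {ι : Type*} [Fintype ι] (p : ℝ) (x : ι → ℝ) : ℝ :=
  (∑ i, |x i| ^ p) ^ (1 / p)

/-- The operator `p`-norm `⦀M⦀_p = sup_{x ≠ 0} ‖Mx‖_p / ‖x‖_p`. -/
noncomputable def opNorm {ι κ : Type*} [Fintype ι] [Fintype κ] (p : ℝ)
    (M : Matrix ι κ ℝ) : ℝ :=
  sSup {t : ℝ | ∃ x : κ → ℝ, x ≠ 0 ∧ t = pnorm p (M.mulVec x) / pnorm p x}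

/-- If `f_{q/p}(Cy)` lies in the image of the incidence matrix `C`, then
`min { ‖x‖_{G,p}^p : ⟨y, x⟩_L = 1 } = ‖y‖_{G,q}^{-p}`. -/
theorem graph_holder_min_eq_of_image (n m : ℕ) (G : WGraph n m) (hG : G.Connected)
    (p q : ℝ) (hp : 1 < p) (hq : 1 < q) (hpq : 1 / p + 1 / q = 1)
    (y : Fin n → ℝ) (hy : G.inc.mulVec y ≠ 0)
    (himg : ∃ u : Fin n → ℝ, G.inc.mulVec u =
      fun ℓ => Real.sign (G.inc.mulVec y ℓ) * |G.inc.mulVec y ℓ| ^ (q / p)) :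
    sInf {e : ℝ | ∃ x : Fin n → ℝ, y ⬝ᵥ G.lap.mulVec x = 1 ∧
        e = (G.gnorm p x) ^ p} = (G.gnorm q y) ^ (-p) := by
  obtain ⟨u, hu⟩ := himg
  have hp0 : (0:ℝ) < p := lt_trans one_pos hp
  have hq0 : (0:ℝ) < q := lt_trans one_pos hq
  set z : Fin m → ℝ := G.inc.mulVec y with hzdef
  set S : ℝ := ∑ ℓ, G.w ℓ * |z ℓ| ^ q with hSdef
  have hterm_nonneg : ∀ ℓ : Fin m, 0 ≤ G.w ℓ * |z ℓ| ^ q := fun ℓ =>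
    mul_nonneg (G.w_pos ℓ).le (Real.rpow_nonneg (abs_nonneg _) q)
  obtain ⟨ℓ₀, hℓ₀⟩ : ∃ ℓ, z ℓ ≠ 0 := by
    by_contra h
    push_neg at h
    exact hy (funext h)
  have hSpos : 0 < S :=
    Finset.sum_pos' (fun ℓ _ => hterm_nonneg ℓ)
      ⟨ℓ₀, Finset.mem_univ _, mul_pos (G.w_pos ℓ₀)
        (Real.rpow_pos_of_pos (abs_pos.2 hℓ₀) q)⟩
  -- the key bilinear identity ⟨y, x⟩_L = ∑ w ℓ * (Cy) ℓ * (Cx) ℓ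
  have hkey : ∀ x : Fin n → ℝ,
      y ⬝ᵥ G.lap.mulVec x = ∑ ℓ, G.w ℓ * z ℓ * G.inc.mulVec x ℓ := by
    intro x
    rw [WGraph.lap, ← Matrix.mulVec_mulVec, ← Matrix.mulVec_mulVec,
      Matrix.dotProduct_mulVec, Matrix.vecMul_transpose]
    simp only [dotProduct, Matrix.mulVec_diagonal]
    exact Finset.sum_congr rfl fun ℓ _ => by ring
  -- exponent arithmetic
  have hqp1 : 1 + q / p = q := by field_simp at hpq ⊢; nlinarith
  have hqpp : q / p * p = q := by field_simp
  have hpq1 : 1 / q * (-p) = 1 - p := by field_simp at hpq ⊢; nlinarith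
  have hpow : ∀ r : ℝ, 0 < r → ∀ A : ℝ, 0 ≤ A → (A ^ (1/r)) ^ r = A := by
    intro r hr A hA
    rw [← Real.rpow_mul hA, one_div, inv_mul_cancel₀ hr.ne', Real.rpow_one]
  -- the optimizer x₀ = S⁻¹ • u
  set x₀ : Fin n → ℝ := S⁻¹ • u with hx0def
  have hCx₀ : ∀ ℓ, G.inc.mulVec x₀ ℓ = S⁻¹ * (Real.sign (z ℓ) * |z ℓ| ^ (q / p)) := by
    intro ℓ
    rw [hx0def, Matrix.mulVec_smul, hu]
    simp
  have hconstr : y ⬝ᵥ G.lap.mulVec x₀ = 1 := by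
    rw [hkey]
    have hterm : ∀ ℓ : Fin m,
        G.w ℓ * z ℓ * G.inc.mulVec x₀ ℓ = S⁻¹ * (G.w ℓ * |z ℓ| ^ q) := by
      intro ℓ
      rw [hCx₀]
      rcases eq_or_ne (z ℓ) 0 with h | h
      · rw [h]; simp [Real.zero_rpow hq0.ne']
      · have hsz : z ℓ * Real.sign (z ℓ) = |z ℓ| := by
          rcases lt_trichotomy (z ℓ) 0 with hlt | heq | hgt
          · rw [Real.sign_of_neg hlt, abs_of_neg hlt]; ring
          · exact absurd heq h
          · rw [Real.sign_of_pos hgt, abs_of_pos hgt]; ring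
        have habs : |z ℓ| * |z ℓ| ^ (q / p) = |z ℓ| ^ q := by
          nth_rewrite 1 [← Real.rpow_one (|z ℓ|)]
          rw [← Real.rpow_add (abs_pos.2 h), hqp1]
        calc G.w ℓ * z ℓ * (S⁻¹ * (Real.sign (z ℓ) * |z ℓ| ^ (q / p)))
            = S⁻¹ * (G.w ℓ * ((z ℓ * Real.sign (z ℓ)) * |z ℓ| ^ (q / p))) := by ring
          _ = S⁻¹ * (G.w ℓ * |z ℓ| ^ q) := by rw [hsz, habs]
    rw [Finset.sum_congr rfl fun ℓ _ => hterm ℓ, ← Finset.mul_sum, ← hSdef,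
      inv_mul_cancel₀ hSpos.ne']
  have hval : (G.gnorm p x₀) ^ p = S ^ (1 - p) := by
    rw [WGraph.gnorm, hpow p hp0 _ (Finset.sum_nonneg fun ℓ _ =>
      mul_nonneg (G.w_pos ℓ).le (Real.rpow_nonneg (abs_nonneg _) p))]
    have hterm : ∀ ℓ : Fin m,
        G.w ℓ * |G.inc.mulVec x₀ ℓ| ^ p = S ^ (-p) * (G.w ℓ * |z ℓ| ^ q) := by
      intro ℓ
      rw [hCx₀]
      rcases eq_or_ne (z ℓ) 0 with h | h
      · rw [h]
        simp [Real.zero_rpow hq0.ne', Real.zero_rpow hp0.ne',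
          Real.zero_rpow (by positivity : q / p ≠ 0)]
      · have hsign : |Real.sign (z ℓ)| = 1 := by
          rcases Real.sign_apply_eq_of_ne_zero _ h with hs | hs <;> rw [hs] <;> norm_num
        have habs1 : |S⁻¹ * (Real.sign (z ℓ) * |z ℓ| ^ (q / p))|
            = S⁻¹ * |z ℓ| ^ (q / p) := by
          rw [abs_mul, abs_mul, hsign, abs_of_pos (inv_pos.2 hSpos),
            abs_of_nonneg (Real.rpow_nonneg (abs_nonneg _) _)]
          ring
        rw [habs1, Real.mul_rpow (inv_pos.2 hSpos).le
            (Real.rpow_nonneg (abs_nonneg _) _),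
          ← Real.rpow_mul (abs_nonneg _), hqpp,
          Real.inv_rpow hSpos.le, ← Real.rpow_neg hSpos.le]
        ring
    rw [Finset.sum_congr rfl fun ℓ _ => hterm ℓ, ← Finset.mul_sum, ← hSdef]
    nth_rewrite 2 [← Real.rpow_one S]
    rw [← Real.rpow_add hSpos]
    ring_nf
  -- lower bound via Hölder
  have hconj : Real.HolderConjugate p q := Real.holderConjugate_iff.mpr ⟨hp, by rw [← one_div, ← one_div]; exact hpq⟩
  have hlb : ∀ e ∈ {e : ℝ | ∃ x : Fin n → ℝ, y ⬝ᵥ G.lap.mulVec x = 1 ∧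
      e = (G.gnorm p x) ^ p}, S ^ (1 - p) ≤ e := by
    rintro e ⟨x, hx1, rfl⟩
    set v : Fin m → ℝ := G.inc.mulVec x with hvdef
    set A : ℝ := ∑ ℓ, G.w ℓ * |v ℓ| ^ p with hAdef
    have hA0 : 0 ≤ A := Finset.sum_nonneg fun ℓ _ =>
      mul_nonneg (G.w_pos ℓ).le (Real.rpow_nonneg (abs_nonneg _) p)
    have hgA : (G.gnorm p x) ^ p = A := by
      rw [WGraph.gnorm, hpow p hp0 _ hA0]
    rw [hgA]
    have H := Real.inner_le_Lp_mul_Lq (s := Finset.univ)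
      (fun ℓ => (G.w ℓ) ^ (1/p) * |v ℓ|) (fun ℓ => (G.w ℓ) ^ (1/q) * |z ℓ|) hconj
    have hfp : ∑ ℓ, abs ((G.w ℓ) ^ (1/p) * |v ℓ|) ^ p = A := by
      refine Finset.sum_congr rfl fun ℓ _ => ?_
      rw [abs_of_nonneg (mul_nonneg (Real.rpow_nonneg (G.w_pos ℓ).le _) (abs_nonneg _)),
        Real.mul_rpow (Real.rpow_nonneg (G.w_pos ℓ).le _) (abs_nonneg _),
        hpow p hp0 _ (G.w_pos ℓ).le]
    have hgq : ∑ ℓ, abs ((G.w ℓ) ^ (1/q) * |z ℓ|) ^ q = S := by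
      refine Finset.sum_congr rfl fun ℓ _ => ?_
      rw [abs_of_nonneg (mul_nonneg (Real.rpow_nonneg (G.w_pos ℓ).le _) (abs_nonneg _)),
        Real.mul_rpow (Real.rpow_nonneg (G.w_pos ℓ).le _) (abs_nonneg _),
        hpow q hq0 _ (G.w_pos ℓ).le]
    rw [hfp, hgq] at H
    have hsum1 : ∑ ℓ, G.w ℓ * z ℓ * v ℓ = 1 := by rw [← hkey x]; exact hx1
    have hone : (1:ℝ) ≤ ∑ ℓ, ((G.w ℓ) ^ (1/p) * |v ℓ|) * ((G.w ℓ) ^ (1/q) * |z ℓ|) := by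
      have hle : ∑ ℓ, G.w ℓ * z ℓ * v ℓ
          ≤ ∑ ℓ, ((G.w ℓ) ^ (1/p) * |v ℓ|) * ((G.w ℓ) ^ (1/q) * |z ℓ|) := by
        refine Finset.sum_le_sum fun ℓ _ => ?_
        have hwsplit : (G.w ℓ) ^ (1/p) * (G.w ℓ) ^ (1/q) = G.w ℓ := by
          rw [← Real.rpow_add (G.w_pos ℓ), hpq, Real.rpow_one]
        calc G.w ℓ * z ℓ * v ℓ ≤ |G.w ℓ * z ℓ * v ℓ| := le_abs_self _
          _ = G.w ℓ * |z ℓ| * |v ℓ| := by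
              rw [abs_mul, abs_mul, abs_of_pos (G.w_pos ℓ)]
          _ = ((G.w ℓ) ^ (1/p) * |v ℓ|) * ((G.w ℓ) ^ (1/q) * |z ℓ|) := by
              rw [show ((G.w ℓ) ^ (1/p) * |v ℓ|) * ((G.w ℓ) ^ (1/q) * |z ℓ|)
                  = ((G.w ℓ) ^ (1/p) * (G.w ℓ) ^ (1/q)) * (|z ℓ| * |v ℓ|) from by ring,
                hwsplit, mul_assoc]
      linarith [hle, hsum1]
    have Hfull : (1:ℝ) ≤ A ^ (1/p) * S ^ (1/q) := le_trans hone H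
    have hSq : (0:ℝ) < S ^ (1/q) := Real.rpow_pos_of_pos hSpos _
    have h1 : S ^ (-(1/q)) ≤ A ^ (1/p) := by
      rw [Real.rpow_neg hSpos.le, inv_eq_one_div]
      exact (div_le_iff₀ hSq).2 (by linarith [Hfull])
    have h2 : (S ^ (-(1/q))) ^ p ≤ (A ^ (1/p)) ^ p :=
      Real.rpow_le_rpow (Real.rpow_nonneg hSpos.le _) h1 hp0.le
    rw [hpow p hp0 _ hA0] at h2
    calc S ^ (1 - p) = (S ^ (-(1/q))) ^ p := by
          rw [← Real.rpow_mul hSpos.le]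
          congr 1
          linarith [hpq1]
      _ ≤ A := h2
  have hmem : S ^ (1 - p) ∈ {e : ℝ | ∃ x : Fin n → ℝ, y ⬝ᵥ G.lap.mulVec x = 1 ∧
      e = (G.gnorm p x) ^ p} := ⟨x₀, hconstr, hval.symm⟩
  have hinf : sInf {e : ℝ | ∃ x : Fin n → ℝ, y ⬝ᵥ G.lap.mulVec x = 1 ∧
      e = (G.gnorm p x) ^ p} = S ^ (1 - p) :=
    le_antisymm (csInf_le ⟨S ^ (1 - p), fun e he => hlb e he⟩ hmem)
      (le_csInf ⟨S ^ (1 - p), hmem⟩ hlb)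
  rw [hinf, WGraph.gnorm, ← hzdef, ← hSdef, ← Real.rpow_mul hSpos.le, hpq1]
end

section
/- If G is a weighted tree and p, q > 1 satisfy 1/p + 1/q = 1, then the effective p-resistance satisfies r_{G,p}(i,j) = ‖L⁺e_i − L⁺e_j‖_{G,q}^p exactly for all vertices i, j. -/
open Matrix Finset

open Matrix Finset

namespace WGraphAux

variable {n m : ℕ}

lemma dot_lap (G : WGraph n m) (v x : Fin n → ℝ) :
    v ⬝ᵥ G.lap.mulVec x = ∑ ℓ, G.w ℓ * (G.inc.mulVec v ℓ) * (G.inc.mulVec x ℓ) := by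
  rw [WGraph.lap, ← Matrix.mulVec_mulVec, ← Matrix.mulVec_mulVec,
    Matrix.dotProduct_mulVec, Matrix.vecMul_transpose]
  unfold dotProduct
  refine Finset.sum_congr rfl fun ℓ _ => ?_
  rw [Matrix.mulVec_diagonal]
  ring

lemma lap_symm (G : WGraph n m) : (G.lap)ᵀ = G.lap := by
  rw [WGraph.lap, Matrix.transpose_mul, Matrix.transpose_mul, Matrix.transpose_transpose,
    Matrix.diagonal_transpose, Matrix.mul_assoc]

lemma lap_ker (G : WGraph n m) (x : Fin n → ℝ) (h : G.lap.mulVec x = 0) :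
    G.inc.mulVec x = 0 := by
  have h0 : ∑ ℓ, G.w ℓ * (G.inc.mulVec x ℓ) * (G.inc.mulVec x ℓ) = 0 := by
    rw [← dot_lap G x x, h, dotProduct_zero]
  have hz := (Finset.sum_eq_zero_iff_of_nonneg (fun ℓ _ => by nlinarith [G.w_pos ℓ, sq_nonneg (G.inc.mulVec x ℓ)])).1 h0
  funext ℓ
  have h1 := hz ℓ (Finset.mem_univ ℓ)
  rw [mul_assoc, mul_eq_zero] at h1
  simp only [Pi.zero_apply]
  rcases h1 with h1 | h1
  · exact absurd h1 (ne_of_gt (G.w_pos ℓ))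
  · exact mul_self_eq_zero.mp h1

lemma inc_one (G : WGraph n m) : G.inc.mulVec (fun _ => 1) = 0 := by
  funext ℓ
  have hrow : ∀ i : Fin n, G.inc ℓ i =
      (if i = G.s ℓ then (1:ℝ) else 0) + (if i = G.t ℓ then (-1:ℝ) else 0) := by
    intro i
    by_cases h1 : i = G.s ℓ <;> by_cases h2 : i = G.t ℓ
    · exact absurd (h1 ▸ h2) (G.s_ne_t ℓ)
    all_goals simp [WGraph.inc, h1, h2, (G.s_ne_t ℓ), Ne.symm (G.s_ne_t ℓ)]
  simp only [Matrix.mulVec, dotProduct, mul_one, Pi.zero_apply]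
  rw [Finset.sum_congr rfl fun i _ => hrow i, Finset.sum_add_distrib]
  simp

lemma inc_surj (G : WGraph n m) (hG : G.Connected) (htree : m + 1 = n) :
    Function.Surjective G.inc.mulVecLin := by
  have hker : LinearMap.ker G.inc.mulVecLin = Submodule.span ℝ {(fun _ => 1 : Fin n → ℝ)} := by
    apply le_antisymm
    · intro x hx
      obtain ⟨c, hc⟩ := hG x (by simpa [Matrix.mulVecLin_apply] using hx)
      have hxc : x = c • (fun _ => (1:ℝ)) := funext fun k => by simp [hc k]
      rw [hxc]
      exact Submodule.smul_mem _ _ (Submodule.mem_span_singleton_self _)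
    · rw [Submodule.span_singleton_le_iff_mem, LinearMap.mem_ker, Matrix.mulVecLin_apply]
      exact inc_one G
  have hnpos : 0 < n := by omega
  have hone : (fun _ => (1:ℝ) : Fin n → ℝ) ≠ 0 := by
    intro h
    exact one_ne_zero (congrFun h ⟨0, hnpos⟩)
  have hrk := LinearMap.finrank_range_add_finrank_ker G.inc.mulVecLin
  rw [hker, finrank_span_singleton hone] at hrk
  simp only [Module.finrank_pi, Fintype.card_fin] at hrk
  rw [← LinearMap.range_eq_top]
  apply Submodule.eq_top_of_finrank_eq
  simp only [Module.finrank_pi, Fintype.card_fin]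
  omega

lemma key1 (a : ℝ) (q : ℝ) (hq : 1 < q) : a * (a * |a| ^ (q-2)) = |a| ^ q := by
  by_cases h0 : a = 0
  · simp [h0, Real.zero_rpow (by linarith : q ≠ 0)]
  · have habs : (0:ℝ) < |a| := abs_pos.2 h0
    have h2 : a * a = |a| ^ (2:ℝ) := by
      rw [show ((2:ℝ)) = ((2:ℕ):ℝ) by norm_num, Real.rpow_natCast, sq_abs, sq]
    calc a * (a * |a| ^ (q-2)) = (a * a) * |a| ^ (q-2) := by ring
      _ = |a| ^ (2:ℝ) * |a| ^ (q-2) := by rw [h2]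
      _ = |a| ^ (2 + (q-2)) := (Real.rpow_add habs _ _).symm
      _ = |a| ^ q := by ring_nf

lemma key2 (a : ℝ) (q p : ℝ) (hq : 1 < q) (hp : 0 < p) (hq1p : (q-1)*p = q) :
    |a * |a| ^ (q-2)| ^ p = |a| ^ q := by
  by_cases h0 : a = 0
  · rw [h0, abs_zero, zero_mul, abs_zero, Real.zero_rpow (ne_of_gt hp),
      Real.zero_rpow (by linarith : q ≠ 0)]
  · have habs : (0:ℝ) < |a| := abs_pos.2 h0
    have h1 : |a * |a| ^ (q-2)| = |a| ^ (q-1) := by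
      rw [abs_mul, abs_of_pos (Real.rpow_pos_of_pos habs _),
        show q - 1 = 1 + (q - 2) by ring, Real.rpow_add habs, Real.rpow_one]
    rw [h1, ← Real.rpow_mul (abs_nonneg a), hq1p]

end WGraphAux

/-- **Theorem (tree case).** If `G` is a weighted tree (connected and `m = n − 1`)
and `p, q > 1` with `1/p + 1/q = 1`, then
`r_{G,p}(i,j) = ‖L⁺e_i − L⁺e_j‖_{G,q}^p` for all vertices `i, j`. -/
theorem presistance_tree_exact (n m : ℕ) (G : WGraph n m) (hG : G.Connected)
    (htree : m + 1 = n)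
    (p q : ℝ) (hp : 1 < p) (hq : 1 < q) (hpq : 1 / p + 1 / q = 1)
    (Lp : Matrix (Fin n) (Fin n) ℝ) (hLp : IsMoorePenrose G.lap Lp)
    (i j : Fin n) :
    G.presistance p i j =
      (G.gnorm q (Lp.mulVec (Pi.single i 1) - Lp.mulVec (Pi.single j 1))) ^ p := by
  classical
  obtain ⟨h1, h2, h3, h4⟩ := hLp
  have hp0 : (0:ℝ) < p := lt_trans one_pos hp
  have hq0 : (0:ℝ) < q := lt_trans one_pos hq
  have hp0' : p ≠ 0 := ne_of_gt hp0
  have hq0' : q ≠ 0 := ne_of_gt hq0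
  by_cases hij : i = j
  · subst hij
    have hset : {e : ℝ | ∃ x : Fin n → ℝ, x i - x i = 1 ∧
        e = ∑ ℓ, G.w ℓ * |G.inc.mulVec x ℓ| ^ p} = (∅ : Set ℝ) := by
      ext e; simp
    rw [WGraph.presistance, hset, Real.sInf_empty, _root_.inv_zero, sub_self]
    have hz : G.gnorm q (0 : Fin n → ℝ) = 0 := by
      rw [WGraph.gnorm]
      have hzz : ∀ ℓ : Fin m, G.w ℓ * |G.inc.mulVec (0 : Fin n → ℝ) ℓ| ^ q = 0 := by
        intro ℓ
        rw [Matrix.mulVec_zero]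
        simp [Real.zero_rpow hq0']
      rw [Finset.sum_congr rfl fun ℓ _ => hzz ℓ, Finset.sum_const_zero,
        Real.zero_rpow (by positivity : 1/q ≠ 0)]
    rw [hz, Real.zero_rpow hp0']
  · have hLsym := WGraphAux.lap_symm G
    set b : Fin n → ℝ := Pi.single i 1 - Pi.single j 1 with hbdef
    set y : Fin n → ℝ := Lp.mulVec b with hydef
    have hyeq : Lp.mulVec (Pi.single i 1) - Lp.mulVec (Pi.single j 1) = y := by
      rw [hydef, hbdef, Matrix.mulVec_sub]
    have hLLp : G.lap * (G.lap * Lp) = G.lap := by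
      have h5 := Matrix.transpose_mul (G.lap * Lp) G.lap
      rw [h1, h3, hLsym] at h5
      exact h5.symm
    have hconst : ∀ x : Fin n → ℝ, ∃ c, ∀ k, x k - (G.lap * Lp).mulVec x k = c := by
      intro x
      have h0 : G.lap.mulVec (x - (G.lap * Lp).mulVec x) = 0 := by
        rw [Matrix.mulVec_sub, Matrix.mulVec_mulVec, hLLp, sub_self]
      obtain ⟨c, hc⟩ := hG _ (WGraphAux.lap_ker G _ h0)
      exact ⟨c, fun k => by simpa using hc k⟩
    have hsumb : ∑ k, b k = 0 := by
      simp [hbdef, Finset.sum_sub_distrib, Pi.single_apply]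
    obtain ⟨cb, hcb⟩ := hconst b
    obtain ⟨c1, hc1⟩ := hconst (fun _ => 1)
    have hdot : (fun _ => (1:ℝ)) ⬝ᵥ (G.lap * Lp).mulVec b
        = ((G.lap * Lp).mulVec (fun _ => 1)) ⬝ᵥ b := by
      rw [Matrix.dotProduct_mulVec, ← h3, Matrix.vecMul_transpose, h3]
    have hlhs : (fun _ => (1:ℝ)) ⬝ᵥ (G.lap * Lp).mulVec b = - (n * cb) := by
      unfold dotProduct
      have hPbk : ∀ k, (G.lap * Lp).mulVec b k = b k - cb := fun k => by
        have := hcb k; linarith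
      calc ∑ k, (fun _ => (1:ℝ)) k * (G.lap * Lp).mulVec b k = ∑ k, (b k - cb) := by
            refine Finset.sum_congr rfl fun k _ => ?_; rw [hPbk k]; ring
        _ = (∑ k, b k) - n * cb := by
            rw [Finset.sum_sub_distrib, Finset.sum_const, Finset.card_univ]; simp
        _ = - (n * cb) := by rw [hsumb]; ring
    have hrhs : ((G.lap * Lp).mulVec (fun _ => 1)) ⬝ᵥ b = 0 := by
      unfold dotProduct
      have hP1k : ∀ k, (G.lap * Lp).mulVec (fun _ => 1) k = 1 - c1 := fun k => by
        have := hc1 k; linarith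
      calc ∑ k, (G.lap * Lp).mulVec (fun _ => 1) k * b k = ∑ k, (1 - c1) * b k := by
            refine Finset.sum_congr rfl fun k _ => ?_; rw [hP1k k]
        _ = (1 - c1) * ∑ k, b k := by rw [Finset.mul_sum]
        _ = 0 := by rw [hsumb, mul_zero]
    have hcb0 : cb = 0 := by
      have hn : (0:ℝ) < n := by
        have : 0 < n := by omega
        exact_mod_cast this
      rw [hlhs, hrhs] at hdot
      have h6 : (n:ℝ) * cb = 0 := by linarith
      rcases mul_eq_zero.1 h6 with h | h
      · exact absurd h (ne_of_gt hn)
      · exact h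
    have hLy : G.lap.mulVec y = b := by
      rw [hydef, Matrix.mulVec_mulVec]
      funext k
      have := hcb k
      rw [hcb0] at this
      linarith
    have hfeas : ∀ x : Fin n → ℝ, x i - x j
        = ∑ ℓ, G.w ℓ * (G.inc.mulVec y ℓ) * (G.inc.mulVec x ℓ) := by
      intro x
      have h6 : b ⬝ᵥ x = x i - x j := by
        rw [hbdef, sub_dotProduct, single_dotProduct, single_dotProduct]
        ring
      have h7 : b ⬝ᵥ x = ∑ ℓ, G.w ℓ * (G.inc.mulVec y ℓ) * (G.inc.mulVec x ℓ) := by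
        rw [← hLy, dotProduct_comm, WGraphAux.dot_lap]
        refine Finset.sum_congr rfl fun ℓ _ => ?_
        ring
      rw [← h6, h7]
    set Kq : ℝ := ∑ ℓ, G.w ℓ * |G.inc.mulVec y ℓ| ^ q with hKqdef
    have hterm_nonneg : ∀ ℓ : Fin m, 0 ≤ G.w ℓ * |G.inc.mulVec y ℓ| ^ q := fun ℓ =>
      mul_nonneg (G.w_pos ℓ).le (Real.rpow_nonneg (abs_nonneg _) q)
    have hex : ∃ ℓ, G.inc.mulVec y ℓ ≠ 0 := by
      by_contra hno
      push_neg at hno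
      have h8 := hfeas (Pi.single i 1)
      rw [Pi.single_eq_same, Pi.single_eq_of_ne (Ne.symm hij)] at h8
      simp only [hno, mul_zero, zero_mul, Finset.sum_const_zero] at h8
      linarith
    have hKq : 0 < Kq := by
      obtain ⟨ℓ₀, hℓ₀⟩ := hex
      exact Finset.sum_pos' (fun ℓ _ => hterm_nonneg ℓ)
        ⟨ℓ₀, Finset.mem_univ _, mul_pos (G.w_pos ℓ₀) (Real.rpow_pos_of_pos (abs_pos.2 hℓ₀) q)⟩
    have hpq' : Real.HolderConjugate p q := Real.holderConjugate_iff.mpr ⟨hp, by rw [← one_div, ← one_div]; exact hpq⟩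
    have hpqmul : p + q = p * q := by
      field_simp at hpq
      linarith
    have hqp : 1 / q * p = p - 1 := by
      field_simp
      nlinarith [hpqmul]
    have hq1p : (q - 1) * p = q := by nlinarith [hpqmul]
    have hlb : ∀ e ∈ {e : ℝ | ∃ x : Fin n → ℝ, x i - x j = 1 ∧
        e = ∑ ℓ, G.w ℓ * |G.inc.mulVec x ℓ| ^ p}, Kq ^ (1 - p) ≤ e := by
      rintro e ⟨x, hx1, rfl⟩
      have hSx_nonneg : 0 ≤ ∑ ℓ, G.w ℓ * |G.inc.mulVec x ℓ| ^ p := Finset.sum_nonneg fun ℓ _ =>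
        mul_nonneg (G.w_pos ℓ).le (Real.rpow_nonneg (abs_nonneg _) p)
      have hH := Real.inner_le_Lp_mul_Lq (Finset.univ)
        (fun ℓ => G.w ℓ ^ (1/p) * G.inc.mulVec x ℓ)
        (fun ℓ => G.w ℓ ^ (1/q) * G.inc.mulVec y ℓ) hpq'
      have e2 : ∀ (ℓ : Fin m) (v : ℝ) (r : ℝ), 0 < r →
          |G.w ℓ ^ (1/r) * v| ^ r = G.w ℓ * |v| ^ r := by
        intro ℓ v r hr
        rw [abs_mul, Real.mul_rpow (abs_nonneg _) (abs_nonneg _),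
          abs_of_pos (Real.rpow_pos_of_pos (G.w_pos ℓ) _),
          ← Real.rpow_mul (G.w_pos ℓ).le, one_div_mul_cancel (ne_of_gt hr), Real.rpow_one]
      have s1 : ∑ ℓ, (G.w ℓ ^ (1/p) * G.inc.mulVec x ℓ) * (G.w ℓ ^ (1/q) * G.inc.mulVec y ℓ)
          = 1 := by
        rw [Finset.sum_congr rfl fun ℓ _ => show
          (G.w ℓ ^ (1/p) * G.inc.mulVec x ℓ) * (G.w ℓ ^ (1/q) * G.inc.mulVec y ℓ)
            = G.w ℓ * G.inc.mulVec y ℓ * G.inc.mulVec x ℓ from by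
          rw [show (G.w ℓ ^ (1/p) * G.inc.mulVec x ℓ) * (G.w ℓ ^ (1/q) * G.inc.mulVec y ℓ)
            = (G.w ℓ ^ (1/p) * G.w ℓ ^ (1/q)) * (G.inc.mulVec y ℓ * G.inc.mulVec x ℓ) from by ring,
            ← Real.rpow_add (G.w_pos ℓ), hpq, Real.rpow_one, mul_assoc]]
        rw [← hfeas x, hx1]
      have s2 : ∑ ℓ, |G.w ℓ ^ (1/p) * G.inc.mulVec x ℓ| ^ p
          = ∑ ℓ, G.w ℓ * |G.inc.mulVec x ℓ| ^ p :=
        Finset.sum_congr rfl fun ℓ _ => e2 ℓ _ p hp0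
      have s3 : ∑ ℓ, |G.w ℓ ^ (1/q) * G.inc.mulVec y ℓ| ^ q = Kq :=
        Finset.sum_congr rfl fun ℓ _ => e2 ℓ _ q hq0
      rw [s1, s2, s3] at hH
      have h11 : Kq ^ (-(1/q)) ≤ (∑ ℓ, G.w ℓ * |G.inc.mulVec x ℓ| ^ p) ^ (1/p) := by
        have h12 := mul_le_mul_of_nonneg_right hH
          (le_of_lt (Real.rpow_pos_of_pos hKq (-(1/q))))
        rw [one_mul, mul_assoc, ← Real.rpow_add hKq, add_neg_cancel, Real.rpow_zero,
          mul_one] at h12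
        exact h12
      have h12 := Real.rpow_le_rpow (Real.rpow_nonneg hKq.le _) h11 hp0.le
      rw [← Real.rpow_mul hKq.le, ← Real.rpow_mul hSx_nonneg, one_div_mul_cancel hp0',
        Real.rpow_one, show -(1/q) * p = 1 - p from by rw [neg_mul, hqp]; ring] at h12
      exact h12
    have hmem : Kq ^ (1 - p) ∈ {e : ℝ | ∃ x : Fin n → ℝ, x i - x j = 1 ∧
        e = ∑ ℓ, G.w ℓ * |G.inc.mulVec x ℓ| ^ p} := by
      obtain ⟨xs, hxs⟩ := WGraphAux.inc_surj G hG htree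
        (fun ℓ => Kq⁻¹ * (G.inc.mulVec y ℓ * |G.inc.mulVec y ℓ| ^ (q-2)))
      rw [Matrix.mulVecLin_apply] at hxs
      have hfe : xs i - xs j = 1 := by
        rw [hfeas xs]
        rw [Finset.sum_congr rfl fun ℓ _ => show
            G.w ℓ * G.inc.mulVec y ℓ * G.inc.mulVec xs ℓ
              = Kq⁻¹ * (G.w ℓ * |G.inc.mulVec y ℓ| ^ q) from by
          rw [congrFun hxs ℓ, ← WGraphAux.key1 (G.inc.mulVec y ℓ) q hq]
          ring]
        rw [← Finset.mul_sum, ← hKqdef, inv_mul_cancel₀ (ne_of_gt hKq)]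
      refine ⟨xs, hfe, ?_⟩
      rw [Finset.sum_congr rfl fun ℓ _ => show
          G.w ℓ * |G.inc.mulVec xs ℓ| ^ p
            = Kq⁻¹ ^ p * (G.w ℓ * |G.inc.mulVec y ℓ| ^ q) from by
        rw [congrFun hxs ℓ, abs_mul, abs_of_nonneg (inv_nonneg.2 hKq.le),
          Real.mul_rpow (inv_nonneg.2 hKq.le) (abs_nonneg _),
          WGraphAux.key2 _ q p hq hp0 hq1p]
        ring]
      rw [← Finset.mul_sum, ← hKqdef, Real.inv_rpow hKq.le, Real.rpow_sub hKq, Real.rpow_one]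
      ring
    have hSinf : sInf {e : ℝ | ∃ x : Fin n → ℝ, x i - x j = 1 ∧
        e = ∑ ℓ, G.w ℓ * |G.inc.mulVec x ℓ| ^ p} = Kq ^ (1 - p) :=
      le_antisymm (csInf_le ⟨Kq ^ (1-p), hlb⟩ hmem) (le_csInf ⟨_, hmem⟩ hlb)
    rw [WGraph.presistance, hSinf, hyeq, WGraph.gnorm, ← hKqdef]
    rw [← Real.rpow_neg hKq.le, neg_sub, ← Real.rpow_mul hKq.le, hqp]
end

section
/- If G is the complete unweighted graph on n vertices with incidence matrix C, then for every p ≥ 1 the operator p-norm of CC⁺ satisfies ⦀CC⁺⦀_p ≤ 4. -/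
open Matrix Finset

/-- The incidence matrix of the complete unweighted graph `K_n`. -/
def completeInc (n : ℕ) : Matrix {e : Fin n × Fin n // e.1 < e.2} (Fin n) ℝ :=
  fun e k => if k = e.1.1 then 1 else if k = e.1.2 then -1 else 0

/-! ### Auxiliary lemmas -/

lemma completeInc_eq (n : ℕ) (e : {e : Fin n × Fin n // e.1 < e.2}) (k : Fin n) :
    completeInc n e k = (if k = e.1.1 then (1:ℝ) else 0) + (if k = e.1.2 then (-1:ℝ) else 0) := by
  have hne : e.1.1 ≠ e.1.2 := ne_of_lt e.2
  unfold completeInc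
  split_ifs with h1 h2 h2 <;> simp_all

lemma sum_edges (n : ℕ) (f : Fin n × Fin n → ℝ) :
    ∑ e : {e : Fin n × Fin n // e.1 < e.2}, f e.1
      = ∑ a : Fin n, ∑ b : Fin n, if a < b then f (a, b) else 0 := by
  rw [← Finset.sum_subtype (p := fun e : Fin n × Fin n => e.1 < e.2)
    (Finset.univ.filter (fun e : Fin n × Fin n => e.1 < e.2)) (by simp) f,
    Finset.sum_filter, Fintype.sum_prod_type]

lemma count_split (n : ℕ) (j : Fin n) :
    ∑ x : Fin n, ((if j < x then (1:ℝ) else 0) + (if x < j then 1 else 0)) = n - 1 := by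
  have : ∀ x : Fin n, ((if j < x then (1:ℝ) else 0) + (if x < j then 1 else 0))
      = 1 - (if x = j then 1 else 0) := by
    intro x
    rcases lt_trichotomy j x with h|h|h
    · simp [h, asymm h, (ne_of_gt h)]
    · simp [h.symm, lt_irrefl]
    · simp [h, asymm h, (ne_of_lt h)]
  rw [Finset.sum_congr rfl (fun x _ => this x), Finset.sum_sub_distrib]
  simp

lemma CtC (n : ℕ) (j k : Fin n) :
    ((completeInc n)ᵀ * completeInc n) j k = (if j = k then (n:ℝ) else 0) - 1 := by
  rw [Matrix.mul_apply]
  simp only [transpose_apply, completeInc_eq]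
  rw [sum_edges n (fun e => ((if j = e.1 then (1:ℝ) else 0) + (if j = e.2 then (-1:ℝ) else 0))
      * ((if k = e.1 then (1:ℝ) else 0) + (if k = e.2 then (-1:ℝ) else 0)))]
  dsimp only
  have step : ∀ a b : Fin n, (if a < b then
      ((if j = a then (1:ℝ) else 0) + (if j = b then (-1:ℝ) else 0))
      * ((if k = a then (1:ℝ) else 0) + (if k = b then (-1:ℝ) else 0)) else 0) =
      (if j = a then (1:ℝ) else 0) * ((if k = a then (1:ℝ) else 0) * (if a < b then 1 else 0))
      - (if j = a then (1:ℝ) else 0) * (if k = b then (if a < b then (1:ℝ) else 0) else 0)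
      - (if k = a then (1:ℝ) else 0) * (if j = b then (if a < b then (1:ℝ) else 0) else 0)
      + (if j = b then (if k = b then (if a < b then (1:ℝ) else 0) else 0) else 0) := by
    intro a b
    by_cases h : a < b
    · by_cases h1 : j = a <;> by_cases h2 : j = b <;> by_cases h3 : k = a <;>
        by_cases h4 : k = b <;> simp_all
    · simp [h]
  simp only [step]
  have e2 : ∀ a : Fin n, ∑ b : Fin n, (if k = b then (if a < b then (1:ℝ) else 0) else 0)
      = (if a < k then (1:ℝ) else 0) := by
    intro a; rw [Finset.sum_ite_eq]; simp
  have e3 : ∀ a : Fin n, ∑ b : Fin n, (if j = b then (if a < b then (1:ℝ) else 0) else 0)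
      = (if a < j then (1:ℝ) else 0) := by
    intro a; rw [Finset.sum_ite_eq]; simp
  have e4a : ∀ a : Fin n, ∑ b : Fin n,
      (if j = b then (if k = b then (if a < b then (1:ℝ) else 0) else 0) else 0)
      = (if k = j then (if a < j then (1:ℝ) else 0) else 0) := by
    intro a; rw [Finset.sum_ite_eq]; simp
  have inner : ∀ a : Fin n, (∑ b : Fin n,
      ((if j = a then (1:ℝ) else 0) * ((if k = a then (1:ℝ) else 0) * (if a < b then 1 else 0))
      - (if j = a then (1:ℝ) else 0) * (if k = b then (if a < b then (1:ℝ) else 0) else 0)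
      - (if k = a then (1:ℝ) else 0) * (if j = b then (if a < b then (1:ℝ) else 0) else 0)
      + (if j = b then (if k = b then (if a < b then (1:ℝ) else 0) else 0) else 0)))
      = (if j = a then (1:ℝ) else 0) * ((if k = a then (1:ℝ) else 0)
          * (∑ b : Fin n, if a < b then (1:ℝ) else 0))
      - (if j = a then (1:ℝ) else 0) * (if a < k then (1:ℝ) else 0)
      - (if k = a then (1:ℝ) else 0) * (if a < j then (1:ℝ) else 0)
      + (if k = j then (if a < j then (1:ℝ) else 0) else 0) := by
    intro a
    rw [Finset.sum_add_distrib, Finset.sum_sub_distrib, Finset.sum_sub_distrib]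
    simp only [← Finset.mul_sum]
    rw [e2 a, e3 a, e4a a]
  rw [Finset.sum_congr rfl (fun a _ => inner a), Finset.sum_add_distrib,
    Finset.sum_sub_distrib, Finset.sum_sub_distrib]
  have e1 : ∑ a : Fin n, (if j = a then (1:ℝ) else 0) *
      ((if k = a then (1:ℝ) else 0) * ∑ b : Fin n, (if a < b then (1:ℝ) else 0))
      = (if k = j then ∑ b : Fin n, (if j < b then (1:ℝ) else 0) else 0) := by
    rw [Finset.sum_congr rfl (fun a _ => by rw [ite_mul, one_mul, zero_mul]),
      Finset.sum_ite_eq]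
    simp
  have eT2 : ∑ a : Fin n, (if j = a then (1:ℝ) else 0) * (if a < k then (1:ℝ) else 0)
      = (if j < k then (1:ℝ) else 0) := by
    rw [Finset.sum_congr rfl (fun a _ => by rw [ite_mul, one_mul, zero_mul]),
      Finset.sum_ite_eq]
    simp
  have eT3 : ∑ a : Fin n, (if k = a then (1:ℝ) else 0) * (if a < j then (1:ℝ) else 0)
      = (if k < j then (1:ℝ) else 0) := by
    rw [Finset.sum_congr rfl (fun a _ => by rw [ite_mul, one_mul, zero_mul]),
      Finset.sum_ite_eq]
    simp
  have e5 : ∑ a : Fin n, (if k = j then (if a < j then (1:ℝ) else 0) else 0)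
      = (if k = j then ∑ a : Fin n, (if a < j then (1:ℝ) else 0) else 0) := by
    by_cases hkj : k = j <;> simp [hkj]
  rw [e1, eT2, eT3, e5]
  by_cases h : j = k
  · subst h
    have := count_split n j
    rw [Finset.sum_add_distrib] at this
    simp
    simp at this
    linarith
  · have h' : k ≠ j := fun hh => h hh.symm
    rcases lt_or_gt_of_ne h with hlt | hgt
    · simp [h, h', hlt, asymm hlt]
    · simp [h, h', hgt, asymm hgt]

lemma rowsum (n : ℕ) (e : {e : Fin n × Fin n // e.1 < e.2}) :
    ∑ k : Fin n, completeInc n e k = 0 := by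
  simp only [completeInc_eq, Finset.sum_add_distrib]
  rw [Finset.sum_ite_eq', Finset.sum_ite_eq']
  simp

/-- The projection `CC⁺` equals `n⁻¹ • C Cᵀ`. -/
lemma proj_eq (n : ℕ) (hn : 0 < n) (Cp : Matrix (Fin n) {e : Fin n × Fin n // e.1 < e.2} ℝ)
    (hCp : IsMoorePenrose (completeInc n) Cp) :
    completeInc n * Cp = (n:ℝ)⁻¹ • (completeInc n * (completeInc n)ᵀ) := by
  obtain ⟨h1, h2, h3, h4⟩ := hCp
  set C := completeInc n with hC
  have hn' : (n:ℝ) ≠ 0 := Nat.cast_ne_zero.mpr hn.ne'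
  have hCtC : C * (Cᵀ * C) = (n:ℝ) • C := by
    ext e k
    rw [Matrix.mul_apply]
    simp only [hC, CtC]
    have hterm : ∀ j : Fin n, C e j * ((if j = k then (n:ℝ) else 0) - 1)
        = (if j = k then (n:ℝ) * C e k else 0) - C e j := by
      intro j; by_cases h : j = k <;> simp [h] <;> ring
    rw [Finset.sum_congr rfl fun j _ => hterm j, Finset.sum_sub_distrib,
      Finset.sum_ite_eq', rowsum]
    simp [Matrix.smul_apply, hC]
  have hQC : ((n:ℝ)⁻¹ • (C * Cᵀ)) * C = C := by
    rw [Matrix.smul_mul, Matrix.mul_assoc, hCtC, smul_smul, inv_mul_cancel₀ hn', one_smul]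
  have hQsymm : ((n:ℝ)⁻¹ • (C * Cᵀ))ᵀ = (n:ℝ)⁻¹ • (C * Cᵀ) := by
    rw [Matrix.transpose_smul, Matrix.transpose_mul, Matrix.transpose_transpose]
  have hPQ : (C * Cp) * ((n:ℝ)⁻¹ • (C * Cᵀ)) = (n:ℝ)⁻¹ • (C * Cᵀ) := by
    rw [Matrix.mul_smul, ← Matrix.mul_assoc, h1]
  have hQP : ((n:ℝ)⁻¹ • (C * Cᵀ)) * (C * Cp) = C * Cp := by
    rw [← Matrix.mul_assoc, hQC]
  calc C * Cp = ((n:ℝ)⁻¹ • (C * Cᵀ)) * (C * Cp) := hQP.symm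
    _ = ((n:ℝ)⁻¹ • (C * Cᵀ))ᵀ * (C * Cp)ᵀ := by rw [hQsymm, h3]
    _ = ((C * Cp) * ((n:ℝ)⁻¹ • (C * Cᵀ)))ᵀ := (Matrix.transpose_mul _ _).symm
    _ = ((n:ℝ)⁻¹ • (C * Cᵀ))ᵀ := by rw [hPQ]
    _ = (n:ℝ)⁻¹ • (C * Cᵀ) := hQsymm

lemma abs_completeInc_le (n : ℕ) (e : {e : Fin n × Fin n // e.1 < e.2}) (k : Fin n) :
    |completeInc n e k| ≤ (if k = e.1.1 then (1:ℝ) else 0) + (if k = e.1.2 then 1 else 0) := by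
  unfold completeInc
  split_ifs <;> norm_num

lemma rowAbs (n : ℕ) (e : {e : Fin n × Fin n // e.1 < e.2}) :
    ∑ k : Fin n, |completeInc n e k| ≤ 2 := by
  calc ∑ k : Fin n, |completeInc n e k|
      ≤ ∑ k : Fin n, ((if k = e.1.1 then (1:ℝ) else 0) + (if k = e.1.2 then 1 else 0)) :=
        Finset.sum_le_sum fun k _ => abs_completeInc_le n e k
    _ = 2 := by
        rw [Finset.sum_add_distrib, Finset.sum_ite_eq', Finset.sum_ite_eq']
        norm_num

lemma colAbs (n : ℕ) (k : Fin n) :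
    ∑ e : {e : Fin n × Fin n // e.1 < e.2}, |completeInc n e k| ≤ 2 * n := by
  calc ∑ e : {e : Fin n × Fin n // e.1 < e.2}, |completeInc n e k|
      ≤ ∑ e : {e : Fin n × Fin n // e.1 < e.2},
          ((if k = e.1.1 then (1:ℝ) else 0) + (if k = e.1.2 then 1 else 0)) :=
        Finset.sum_le_sum fun e _ => abs_completeInc_le n e k
    _ = ∑ a : Fin n, ∑ b : Fin n, (if a < b then
          ((if k = (a,b).1 then (1:ℝ) else 0) + (if k = (a,b).2 then 1 else 0)) else 0) :=
        sum_edges n (fun e => (if k = e.1 then (1:ℝ) else 0) + (if k = e.2 then 1 else 0))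
    _ = ∑ a : Fin n, ∑ b : Fin n, (if a < b then
          ((if k = a then (1:ℝ) else 0) + (if k = b then 1 else 0)) else 0) := rfl
    _ ≤ ∑ a : Fin n, ∑ b : Fin n, ((if k = a then (1:ℝ) else 0) + (if k = b then 1 else 0)) := by
        refine Finset.sum_le_sum fun a _ => Finset.sum_le_sum fun b _ => ?_
        split_ifs <;> norm_num
    _ = 2 * n := by
        have hb : ∀ a : Fin n, ∑ b : Fin n,
            ((if k = a then (1:ℝ) else 0) + (if k = b then 1 else 0))
            = (n : ℝ) * (if k = a then (1:ℝ) else 0) + 1 := by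
          intro a
          rw [Finset.sum_add_distrib, Finset.sum_const, Finset.sum_ite_eq]
          simp [mul_comm]
        rw [Finset.sum_congr rfl fun a _ => hb a, Finset.sum_add_distrib, ← Finset.mul_sum,
          Finset.sum_ite_eq]
        simp [two_mul]

lemma pnorm_pos {ι : Type*} [Fintype ι] {p : ℝ} (hp : 1 ≤ p) {x : ι → ℝ} (hx : x ≠ 0) :
    0 < pnorm p x := by
  obtain ⟨i, hi⟩ : ∃ i, x i ≠ 0 := by
    by_contra h; push_neg at h; exact hx (funext h)
  have hsum : 0 < ∑ i, |x i| ^ p :=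
    Finset.sum_pos' (fun j _ => Real.rpow_nonneg (abs_nonneg _) p)
      ⟨i, Finset.mem_univ i, Real.rpow_pos_of_pos (abs_pos.mpr hi) p⟩
  exact Real.rpow_pos_of_pos hsum _

lemma pnorm_mulVec_le {ι κ : Type*} [Fintype ι] [Fintype κ] (M : Matrix ι κ ℝ) {R : ℝ}
    (hR : 0 < R) (hrow : ∀ i, ∑ j, |M i j| ≤ R) (hcol : ∀ j, ∑ i, |M i j| ≤ R)
    {p : ℝ} (hp : 1 ≤ p) (x : κ → ℝ) :
    pnorm p (M.mulVec x) ≤ R * pnorm p x := by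
  have hp0 : (0:ℝ) < p := lt_of_lt_of_le one_pos hp
  have hS : 0 ≤ ∑ j, |x j| ^ p := Finset.sum_nonneg fun j _ => Real.rpow_nonneg (abs_nonneg _) p
  have main : ∑ i, |M.mulVec x i| ^ p ≤ R ^ p * ∑ j, |x j| ^ p := by
    have pointwise : ∀ i, |M.mulVec x i| ^ p
        ≤ R ^ (p - 1) * ∑ j, |M i j| * |x j| ^ p := by
      intro i
      have h1 : |M.mulVec x i| ≤ ∑ j, |M i j| * |x j| := by
        refine le_trans ?_ (le_of_eq rfl)
        calc |M.mulVec x i| = |∑ j, M i j * x j| := by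
              simp [Matrix.mulVec, dotProduct]
          _ ≤ ∑ j, |M i j * x j| := Finset.abs_sum_le_sum_abs _ _
          _ = ∑ j, |M i j| * |x j| := by simp [abs_mul]
      have h2 : |M.mulVec x i| ^ p ≤ (∑ j, |M i j| * |x j|) ^ p :=
        Real.rpow_le_rpow (abs_nonneg _) h1 hp0.le
      have h3 := Real.inner_le_weight_mul_Lp_of_nonneg Finset.univ hp
        (fun j => |M i j|) (fun j => |x j|) (fun j => abs_nonneg _) (fun j => abs_nonneg _)
      have hW : 0 ≤ ∑ j, |M i j| := Finset.sum_nonneg fun j _ => abs_nonneg _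
      have hT : 0 ≤ ∑ j, |M i j| * |x j| ^ p :=
        Finset.sum_nonneg fun j _ =>
          mul_nonneg (abs_nonneg _) (Real.rpow_nonneg (abs_nonneg _) p)
      have h4 : (∑ j, |M i j| * |x j|) ^ p
          ≤ ((∑ j, |M i j|) ^ (1 - p⁻¹) * (∑ j, |M i j| * |x j| ^ p) ^ p⁻¹) ^ p := by
        refine Real.rpow_le_rpow ?_ h3 hp0.le
        exact Finset.sum_nonneg fun j _ => mul_nonneg (abs_nonneg _) (abs_nonneg _)
      have h5 : ((∑ j, |M i j|) ^ (1 - p⁻¹) * (∑ j, |M i j| * |x j| ^ p) ^ p⁻¹) ^ p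
          = (∑ j, |M i j|) ^ (p - 1) * ∑ j, |M i j| * |x j| ^ p := by
        rw [Real.mul_rpow (Real.rpow_nonneg hW _) (Real.rpow_nonneg hT _),
          ← Real.rpow_mul hW, ← Real.rpow_mul hT, one_sub_mul,
          inv_mul_cancel₀ hp0.ne', Real.rpow_one]
      have h6 : (∑ j, |M i j|) ^ (p - 1) ≤ R ^ (p - 1) :=
        Real.rpow_le_rpow hW (hrow i) (by linarith)
      calc |M.mulVec x i| ^ p ≤ (∑ j, |M i j| * |x j|) ^ p := h2
        _ ≤ (∑ j, |M i j|) ^ (p - 1) * ∑ j, |M i j| * |x j| ^ p := by rw [← h5]; exact h4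
        _ ≤ R ^ (p - 1) * ∑ j, |M i j| * |x j| ^ p :=
            mul_le_mul_of_nonneg_right h6 hT
    have swap : ∑ i, ∑ j, |M i j| * |x j| ^ p = ∑ j, (∑ i, |M i j|) * |x j| ^ p := by
      rw [Finset.sum_comm]
      exact Finset.sum_congr rfl fun j _ => (Finset.sum_mul _ _ _).symm
    calc ∑ i, |M.mulVec x i| ^ p
        ≤ ∑ i, R ^ (p - 1) * ∑ j, |M i j| * |x j| ^ p :=
          Finset.sum_le_sum fun i _ => pointwise i
      _ = R ^ (p - 1) * ∑ j, (∑ i, |M i j|) * |x j| ^ p := by rw [← Finset.mul_sum, swap]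
      _ ≤ R ^ (p - 1) * ∑ j, R * |x j| ^ p := by
          refine mul_le_mul_of_nonneg_left (Finset.sum_le_sum fun j _ => ?_)
            (Real.rpow_nonneg hR.le _)
          exact mul_le_mul_of_nonneg_right (hcol j) (Real.rpow_nonneg (abs_nonneg _) p)
      _ = R ^ (p - 1) * R * ∑ j, |x j| ^ p := by rw [← Finset.mul_sum]; ring
      _ = R ^ p * ∑ j, |x j| ^ p := by
          rw [← Real.rpow_add_one hR.ne' (p - 1), sub_add_cancel]
  have hMx : 0 ≤ ∑ i, |M.mulVec x i| ^ p :=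
    Finset.sum_nonneg fun i _ => Real.rpow_nonneg (abs_nonneg _) p
  unfold pnorm
  calc (∑ i, |M.mulVec x i| ^ p) ^ (1 / p)
      ≤ (R ^ p * ∑ j, |x j| ^ p) ^ (1 / p) :=
        Real.rpow_le_rpow hMx main (by positivity)
    _ = R * (∑ j, |x j| ^ p) ^ (1 / p) := by
        rw [Real.mul_rpow (Real.rpow_nonneg hR.le p) hS, ← Real.rpow_mul hR.le,
          mul_one_div, div_self hp0.ne', Real.rpow_one]

lemma CCt_symm (n : ℕ) (e f : {e : Fin n × Fin n // e.1 < e.2}) :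
    (completeInc n * (completeInc n)ᵀ) e f = (completeInc n * (completeInc n)ᵀ) f e := by
  rw [Matrix.mul_apply, Matrix.mul_apply]
  exact Finset.sum_congr rfl fun k _ => by rw [transpose_apply, transpose_apply, mul_comm]

lemma Qrow (n : ℕ) (hn : 0 < n) (e : {e : Fin n × Fin n // e.1 < e.2}) :
    ∑ f, |((n:ℝ)⁻¹ • (completeInc n * (completeInc n)ᵀ)) e f| ≤ 4 := by
  have hn' : (0:ℝ) < n := by exact_mod_cast hn
  have habs : ∀ f, |((n:ℝ)⁻¹ • (completeInc n * (completeInc n)ᵀ)) e f|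
      ≤ (n:ℝ)⁻¹ * ∑ k, |completeInc n e k| * |completeInc n f k| := by
    intro f
    rw [Matrix.smul_apply, smul_eq_mul, abs_mul, abs_inv, Nat.abs_cast]
    refine mul_le_mul_of_nonneg_left ?_ (by positivity)
    rw [Matrix.mul_apply]
    refine (Finset.abs_sum_le_sum_abs _ _).trans (le_of_eq ?_)
    exact Finset.sum_congr rfl fun k _ => by rw [transpose_apply, abs_mul]
  calc ∑ f, |((n:ℝ)⁻¹ • (completeInc n * (completeInc n)ᵀ)) e f|
      ≤ ∑ f, (n:ℝ)⁻¹ * ∑ k, |completeInc n e k| * |completeInc n f k| :=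
        Finset.sum_le_sum fun f _ => habs f
    _ = (n:ℝ)⁻¹ * ∑ k, |completeInc n e k| * ∑ f, |completeInc n f k| := by
        rw [← Finset.mul_sum, Finset.sum_comm]
        congr 1
        exact Finset.sum_congr rfl fun k _ => (Finset.mul_sum _ _ _).symm
    _ ≤ (n:ℝ)⁻¹ * ∑ k, |completeInc n e k| * (2 * n) := by
        refine mul_le_mul_of_nonneg_left (Finset.sum_le_sum fun k _ => ?_) (by positivity)
        exact mul_le_mul_of_nonneg_left (colAbs n k) (abs_nonneg _)
    _ = (n:ℝ)⁻¹ * (2 * n) * ∑ k, |completeInc n e k| := by rw [← Finset.sum_mul]; ring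
    _ ≤ (n:ℝ)⁻¹ * (2 * n) * 2 := by
        refine mul_le_mul_of_nonneg_left (rowAbs n e) (by positivity)
    _ = 4 := by field_simp; ring

lemma Qcol (n : ℕ) (hn : 0 < n) (f : {e : Fin n × Fin n // e.1 < e.2}) :
    ∑ e, |((n:ℝ)⁻¹ • (completeInc n * (completeInc n)ᵀ)) e f| ≤ 4 := by
  have : ∀ e, |((n:ℝ)⁻¹ • (completeInc n * (completeInc n)ᵀ)) e f|
      = |((n:ℝ)⁻¹ • (completeInc n * (completeInc n)ᵀ)) f e| := by
    intro e
    rw [Matrix.smul_apply, Matrix.smul_apply, CCt_symm n e f]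
  rw [Finset.sum_congr rfl fun e _ => this e]
  exact Qrow n hn f

/-- For the complete graph `K_n` with incidence matrix `C`, the operator `p`-norm
of `CC⁺` satisfies `⦀CC⁺⦀_p ≤ 4` for every `p ≥ 1`. -/
theorem completeGraph_opNorm_proj_le_four (n : ℕ) (hn : 0 < n)
    (Cp : Matrix (Fin n) {e : Fin n × Fin n // e.1 < e.2} ℝ)
    (hCp : IsMoorePenrose (completeInc n) Cp) (p : ℝ) (hp : 1 ≤ p) :
    opNorm p (completeInc n * Cp) ≤ 4 := by
  rw [proj_eq n hn Cp hCp]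
  refine Real.sSup_le ?_ (by norm_num)
  rintro t ⟨x, hx, rfl⟩
  rw [div_le_iff₀ (pnorm_pos hp hx)]
  exact pnorm_mulVec_le _ (R := 4) (by norm_num) (fun e => Qrow n hn e)
    (fun f => Qcol n hn f) hp x
end
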